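/- Alpha-equivalence alpha is an equivalence relation (reflexive, symmetric, transitive) on good quasiterms, and alphaAbs is an equivalence relation on good quasiabstractions. -/
import Mathlib


open scoped Classical

universe u

section Binding

variable (var varsort index bindex opsym : Type u)

/-! ### Inputs -/

/-- An `(α,β)`-input: a partial function from `α` to `β`. -/
abbrev Input (α β : Type u) : Type u := α → Option β

/-- The domain of an input. -/
def idom {α β : Type u} (inp : Input α β) : Set α := {a | inp a ≠ none}

/-- The componentwise lifting of a predicate to inputs. -/
def liftP {α β : Type u} (P : β → Prop) (inp : Input α β) : Prop :=
  ∀ a b, inp a = some b → P b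

/-- The componentwise lifting of a function to inputs. -/
def liftF {α β γ : Type u} (f : β → γ) (inp : Input α β) : Input α γ :=
  fun a => (inp a).map f

/-- An input is small if its domain has cardinality smaller than that of `var`. -/
def smallDom {α β : Type u} (inp : Input α β) : Prop :=
  Cardinal.mk (idom inp) < Cardinal.mk var

/-! ### Quasiterms -/

mutual
/-- Quasiterms: raw terms before quotienting by alpha-equivalence. -/
inductive QTerm : Type u where
  | qVar : varsort → var → QTerm
  | qOp : opsym → (index → Option QTerm) → (bindex → Option QAbs) → QTerm
/-- Quasiabstractions. -/
inductive QAbs : Type u where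
  | qAbs : varsort → var → QTerm → QAbs
end

/-- Transposition of two variables. -/
noncomputable def swapVar (z1 z2 x : var) : var :=
  if x = z1 then z2 else if x = z2 then z1 else x

/-- Sort-aware transposition of variables (acts only on variables of varsort `zs`). -/
noncomputable def swapVarS (zs xs : varsort) (z1 z2 x : var) : var :=
  if xs = zs then swapVar var z1 z2 x else x

variable {var varsort index bindex opsym}

/-- Swapping of the variables `z1`, `z2` at varsort `zs` in a quasiterm
(transposing them everywhere, including binding positions). -/
noncomputable def qSwap (z1 z2 : var) (zs : varsort) :
    QTerm var varsort index bindex opsym → QTerm var varsort index bindex opsym :=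
  QTerm.rec (motive_1 := fun _ => QTerm var varsort index bindex opsym)
    (motive_2 := fun _ => QAbs var varsort index bindex opsym)
    (motive_3 := fun _ => Option (QTerm var varsort index bindex opsym))
    (motive_4 := fun _ => Option (QAbs var varsort index bindex opsym))
    (fun xs x => .qVar xs (swapVarS var varsort zs xs z1 z2 x))
    (fun d _ _ rinp rbinp => .qOp d rinp rbinp)
    (fun xs x _ rX => .qAbs xs (swapVarS var varsort zs xs z1 z2 x) rX)
    none (fun _ r => some r) none (fun _ r => some r)

/-- Swapping of variables in a quasiabstraction. -/
noncomputable def qSwapAbs (z1 z2 : var) (zs : varsort) :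
    QAbs var varsort index bindex opsym → QAbs var varsort index bindex opsym
  | .qAbs xs x X => .qAbs xs (swapVarS var varsort zs xs z1 z2 x) (qSwap z1 z2 zs X)

/-! ### Freshness and goodness -/

mutual
/-- `QFresh ys y X`: the variable `y` of varsort `ys` has no free occurrence in `X`. -/
inductive QFresh : varsort → var → QTerm var varsort index bindex opsym → Prop where
  | qVar : ∀ {ys y xs x}, (ys, y) ≠ (xs, x) → QFresh ys y (.qVar xs x)
  | qOp : ∀ {ys y d inp binp}, (∀ i X, inp i = some X → QFresh ys y X) →
      (∀ j A, binp j = some A → QFreshAbs ys y A) → QFresh ys y (.qOp d inp binp)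
/-- Freshness for quasiabstractions. -/
inductive QFreshAbs : varsort → var → QAbs var varsort index bindex opsym → Prop where
  | qAbs_bound : ∀ {xs x X}, QFreshAbs xs x (.qAbs xs x X)
  | qAbs_body : ∀ {ys y xs x X}, QFresh ys y X → QFreshAbs ys y (.qAbs xs x X)
end

mutual
/-- Good quasiterms: all constructors branch less than `|var|`. -/
inductive QGood : QTerm var varsort index bindex opsym → Prop where
  | qVar : ∀ {xs x}, QGood (.qVar xs x)
  | qOp : ∀ {d inp binp}, (∀ i X, inp i = some X → QGood X) →
      (∀ j A, binp j = some A → QGoodAbs A) →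
      smallDom var inp → smallDom var binp → QGood (.qOp d inp binp)
/-- Good quasiabstractions. -/
inductive QGoodAbs : QAbs var varsort index bindex opsym → Prop where
  | qAbs : ∀ {xs x X}, QGood X → QGoodAbs (.qAbs xs x X)
end

/-! ### Alpha-equivalence -/

mutual
/-- Alpha-equivalence of quasiterms. -/
inductive Alpha : QTerm var varsort index bindex opsym →
    QTerm var varsort index bindex opsym → Prop where
  | qVar : ∀ {xs x}, Alpha (.qVar xs x) (.qVar xs x)
  | qOp : ∀ {d inp binp inp' binp'},
      (∀ i, inp i = none ↔ inp' i = none) →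
      (∀ i X X', inp i = some X → inp' i = some X' → Alpha X X') →
      (∀ j, binp j = none ↔ binp' j = none) →
      (∀ j A A', binp j = some A → binp' j = some A' → AlphaAbs A A') →
      Alpha (.qOp d inp binp) (.qOp d inp' binp')
/-- Alpha-equivalence of quasiabstractions (the exists-fresh formulation). -/
inductive AlphaAbs : QAbs var varsort index bindex opsym →
    QAbs var varsort index bindex opsym → Prop where
  | qAbs : ∀ {xs x x' X X' y}, y ∉ ({x, x'} : Set var) →
      QFresh xs y X → QFresh xs y X' →
      Alpha (qSwap y x xs X) (qSwap y x' xs X') →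
      AlphaAbs (.qAbs xs x X) (.qAbs xs x' X')
end

/-! ### Terms and abstractions as quotients -/

variable (var varsort index bindex opsym)

/-- Terms: quasiterms modulo alpha-equivalence. -/
def Term : Type u := Quot (@Alpha var varsort index bindex opsym)

/-- Abstractions: quasiabstractions modulo alpha-equivalence. -/
def Abstr : Type u := Quot (@AlphaAbs var varsort index bindex opsym)

variable {var varsort index bindex opsym}

/-- The projection from quasiterms to terms. -/
def tmk : QTerm var varsort index bindex opsym → Term var varsort index bindex opsym :=
  Quot.mk _

/-- The projection from quasiabstractions to abstractions. -/
def amk : QAbs var varsort index bindex opsym → Abstr var varsort index bindex opsym :=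
  Quot.mk _

/-- A representative of a term. -/
noncomputable def trep (X : Term var varsort index bindex opsym) :
    QTerm var varsort index bindex opsym := Quot.out X

/-- A representative of an abstraction. -/
noncomputable def arep (A : Abstr var varsort index bindex opsym) :
    QAbs var varsort index bindex opsym := Quot.out A

/-- Good terms. -/
def good (X : Term var varsort index bindex opsym) : Prop := QGood (trep X)

/-- Good abstractions. -/
def goodAbs (A : Abstr var varsort index bindex opsym) : Prop := QGoodAbs (arep A)

/-- The variable-injection constructor on terms. -/
def Var (xs : varsort) (x : var) : Term var varsort index bindex opsym :=
  tmk (.qVar xs x)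

/-- The operation constructor on terms. -/
noncomputable def Op (d : opsym) (inp : Input index (Term var varsort index bindex opsym))
    (binp : Input bindex (Abstr var varsort index bindex opsym)) :
    Term var varsort index bindex opsym :=
  tmk (.qOp d (liftF trep inp) (liftF arep binp))

/-- The abstraction constructor. -/
noncomputable def Abs (xs : varsort) (x : var) (X : Term var varsort index bindex opsym) :
    Abstr var varsort index bindex opsym :=
  amk (.qAbs xs x (trep X))

/-- Freshness on terms. -/
def fresh (ys : varsort) (y : var) (X : Term var varsort index bindex opsym) : Prop :=
  QFresh ys y (trep X)

/-- Freshness on abstractions. -/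
def freshAbs (ys : varsort) (y : var) (A : Abstr var varsort index bindex opsym) : Prop :=
  QFreshAbs ys y (arep A)

/-- Swapping on terms. -/
noncomputable def tswap (X : Term var varsort index bindex opsym)
    (z1 z2 : var) (zs : varsort) : Term var varsort index bindex opsym :=
  tmk (qSwap z1 z2 zs (trep X))

/-! ### Substitution -/

mutual
/-- The graph of capture-avoiding substitution on quasiterms:
`QSubst X Y y ys Z` means that `Z` is a result of substituting `Y` for the free
occurrences of the variable `y` of varsort `ys` in `X` (along a capture-free
representative). -/
inductive QSubst : QTerm var varsort index bindex opsym →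
    QTerm var varsort index bindex opsym → var → varsort →
    QTerm var varsort index bindex opsym → Prop where
  | var_eq : ∀ {Y y ys}, QSubst (.qVar ys y) Y y ys Y
  | var_ne : ∀ {Y y ys xs x}, (xs, x) ≠ (ys, y) → QSubst (.qVar xs x) Y y ys (.qVar xs x)
  | op : ∀ {Y y ys d inp binp inp' binp'},
      (∀ i, inp i = none ↔ inp' i = none) →
      (∀ i X X', inp i = some X → inp' i = some X' → QSubst X Y y ys X') →
      (∀ j, binp j = none ↔ binp' j = none) →
      (∀ j A A', binp j = some A → binp' j = some A' → QSubstAbs A Y y ys A') →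
      QSubst (.qOp d inp binp) Y y ys (.qOp d inp' binp')
/-- The graph of capture-avoiding substitution on quasiabstractions. -/
inductive QSubstAbs : QAbs var varsort index bindex opsym →
    QTerm var varsort index bindex opsym → var → varsort →
    QAbs var varsort index bindex opsym → Prop where
  | abs : ∀ {Y y ys xs x X X'}, (xs, x) ≠ (ys, y) → QFresh xs x Y →
      QSubst X Y y ys X' → QSubstAbs (.qAbs xs x X) Y y ys (.qAbs xs x X')
end

/-- The graph of capture-avoiding substitution on terms. -/
def SubstRel (X Y : Term var varsort index bindex opsym) (y : var) (ys : varsort)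
    (Z : Term var varsort index bindex opsym) : Prop :=
  ∃ qX qZ, tmk qX = X ∧ tmk qZ = Z ∧ QSubst qX (trep Y) y ys qZ

/-- Capture-avoiding substitution on terms: `subst X Y y ys` is `X[Y/y]_ys`. -/
noncomputable def subst (X Y : Term var varsort index bindex opsym)
    (y : var) (ys : varsort) : Term var varsort index bindex opsym :=
  if h : ∃ Z, SubstRel X Y y ys Z then h.choose else X

/-- The graph of capture-avoiding substitution on abstractions. -/
def SubstAbsRel (A : Abstr var varsort index bindex opsym)
    (Y : Term var varsort index bindex opsym) (y : var) (ys : varsort)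
    (B : Abstr var varsort index bindex opsym) : Prop :=
  ∃ qA qB, amk qA = A ∧ amk qB = B ∧ QSubstAbs qA (trep Y) y ys qB

/-- Capture-avoiding substitution on abstractions: `substAbs A Y y ys` is `A[Y/y]_ys`. -/
noncomputable def substAbs (A : Abstr var varsort index bindex opsym)
    (Y : Term var varsort index bindex opsym) (y : var) (ys : varsort) :
    Abstr var varsort index bindex opsym :=
  if h : ∃ B, SubstAbsRel A Y y ys B then h.choose else A

/-! ### Parallel substitution -/

mutual
/-- The graph of capture-avoiding parallel substitution on quasiterms, along an
assignment `ρ : varsort → var → Option qterm`. -/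
inductive QPSubst : QTerm var varsort index bindex opsym →
    (varsort → var → Option (QTerm var varsort index bindex opsym)) →
    QTerm var varsort index bindex opsym → Prop where
  | var_some : ∀ {ρ xs x Y}, ρ xs x = some Y → QPSubst (.qVar xs x) ρ Y
  | var_none : ∀ {ρ xs x}, ρ xs x = none → QPSubst (.qVar xs x) ρ (.qVar xs x)
  | op : ∀ {ρ d inp binp inp' binp'},
      (∀ i, inp i = none ↔ inp' i = none) →
      (∀ i X X', inp i = some X → inp' i = some X' → QPSubst X ρ X') →
      (∀ j, binp j = none ↔ binp' j = none) →
      (∀ j A A', binp j = some A → binp' j = some A' → QPSubstAbs A ρ A') →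
      QPSubst (.qOp d inp binp) ρ (.qOp d inp' binp')
/-- The graph of capture-avoiding parallel substitution on quasiabstractions. -/
inductive QPSubstAbs : QAbs var varsort index bindex opsym →
    (varsort → var → Option (QTerm var varsort index bindex opsym)) →
    QAbs var varsort index bindex opsym → Prop where
  | abs : ∀ {ρ xs x X X'}, ρ xs x = none →
      (∀ ys y Y, ρ ys y = some Y → QFresh xs x Y) →
      QPSubst X ρ X' → QPSubstAbs (.qAbs xs x X) ρ (.qAbs xs x X')
end

/-- Turning a term-valued assignment into a quasiterm-valued one, by picking
representatives. -/
noncomputable def qassign (ρ : varsort → var → Option (Term var varsort index bindex opsym)) :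
    varsort → var → Option (QTerm var varsort index bindex opsym) :=
  fun xs x => (ρ xs x).map trep

/-- The graph of parallel substitution on terms. -/
def PSubstRel (X : Term var varsort index bindex opsym)
    (ρ : varsort → var → Option (Term var varsort index bindex opsym))
    (Z : Term var varsort index bindex opsym) : Prop :=
  ∃ qX qZ, tmk qX = X ∧ tmk qZ = Z ∧ QPSubst qX (qassign ρ) qZ

/-- Capture-avoiding parallel substitution on terms: `psubst X ρ` is `X[ρ]`. -/
noncomputable def psubst (X : Term var varsort index bindex opsym)
    (ρ : varsort → var → Option (Term var varsort index bindex opsym)) :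
    Term var varsort index bindex opsym :=
  if h : ∃ Z, PSubstRel X ρ Z then h.choose else X

/-- The graph of parallel substitution on abstractions. -/
def PSubstAbsRel (A : Abstr var varsort index bindex opsym)
    (ρ : varsort → var → Option (Term var varsort index bindex opsym))
    (B : Abstr var varsort index bindex opsym) : Prop :=
  ∃ qA qB, amk qA = A ∧ amk qB = B ∧ QPSubstAbs qA (qassign ρ) qB

/-- Capture-avoiding parallel substitution on abstractions. -/
noncomputable def psubstAbs (A : Abstr var varsort index bindex opsym)
    (ρ : varsort → var → Option (Term var varsort index bindex opsym)) :
    Abstr var varsort index bindex opsym :=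
  if h : ∃ B, PSubstAbsRel A ρ B then h.choose else A
section Dev
variable {var varsort index bindex opsym : Type u}

-- abbreviations
local notation "QT" => QTerm var varsort index bindex opsym
local notation "QA" => QAbs var varsort index bindex opsym

/-- mutual structural induction -/
theorem qterm_induct {P : QT → Prop} {Q : QA → Prop}
    (hvar : ∀ xs x, P (.qVar xs x))
    (hop : ∀ d inp binp, (∀ i X, inp i = some X → P X) →
      (∀ j A, binp j = some A → Q A) → P (.qOp d inp binp))
    (habs : ∀ xs x X, P X → Q (.qAbs xs x X)) :
    (∀ X, P X) ∧ (∀ A, Q A) := by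
  have hm3 : ∀ o : Option QT, (∀ X, o = some X → P X) → True := fun _ _ => trivial
  refine ⟨fun X => ?_, fun A => ?_⟩
  · exact QTerm.rec (motive_1 := P) (motive_2 := Q)
      (motive_3 := fun o => ∀ X, o = some X → P X)
      (motive_4 := fun o => ∀ A, o = some A → Q A)
      hvar (fun d inp binp rinp rbinp => hop d inp binp rinp rbinp)
      (fun xs x X rX => habs xs x X rX)
      (fun X h => nomatch h) (fun X rX X' h => by cases h; exact rX)
      (fun A h => nomatch h) (fun A rA A' h => by cases h; exact rA) X
  · exact QAbs.rec (motive_1 := P) (motive_2 := Q)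
      (motive_3 := fun o => ∀ X, o = some X → P X)
      (motive_4 := fun o => ∀ A, o = some A → Q A)
      hvar (fun d inp binp rinp rbinp => hop d inp binp rinp rbinp)
      (fun xs x X rX => habs xs x X rX)
      (fun X h => nomatch h) (fun X rX X' h => by cases h; exact rX)
      (fun A h => nomatch h) (fun A rA A' h => by cases h; exact rA) A

@[simp] theorem qSwap_qVar (z1 z2 : var) (zs xs : varsort) (x : var) :
    qSwap z1 z2 zs (QTerm.qVar xs x : QT) = .qVar xs (swapVarS var varsort zs xs z1 z2 x) := rfl

@[simp] theorem qSwap_qOp (z1 z2 : var) (zs : varsort) (d : opsym)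
    (inp : index → Option QT) (binp : bindex → Option QA) :
    qSwap z1 z2 zs (QTerm.qOp d inp binp : QT) =
      .qOp d (fun i => (inp i).map (qSwap z1 z2 zs)) (fun j => (binp j).map (qSwapAbs z1 z2 zs)) := by
  show QTerm.qOp d _ _ = _
  congr 1 <;> funext a
  · cases inp a <;> rfl
  · rcases h : binp a with _ | ⟨xs, x, X⟩ <;> rfl

@[simp] theorem qSwapAbs_qAbs (z1 z2 : var) (zs xs : varsort) (x : var) (X : QT) :
    qSwapAbs z1 z2 zs (QAbs.qAbs xs x X : QA) =
      .qAbs xs (swapVarS var varsort zs xs z1 z2 x) (qSwap z1 z2 zs X) := rfl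

end Dev
section Dev2
variable {var varsort index bindex opsym : Type u}
local notation "QT" => QTerm var varsort index bindex opsym
local notation "QA" => QAbs var varsort index bindex opsym

theorem swapVar_invol (z1 z2 x : var) : swapVar var z1 z2 (swapVar var z1 z2 x) = x := by
  unfold swapVar; split_ifs <;> simp_all

theorem swapVarS_invol (zs xs : varsort) (z1 z2 x : var) :
    swapVarS var varsort zs xs z1 z2 (swapVarS var varsort zs xs z1 z2 x) = x := by
  unfold swapVarS; split_ifs <;> simp [swapVar_invol]

theorem swapVarS_inj (zs xs : varsort) (z1 z2 : var) {x y : var}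
    (h : swapVarS var varsort zs xs z1 z2 x = swapVarS var varsort zs xs z1 z2 y) : x = y := by
  have := congrArg (swapVarS var varsort zs xs z1 z2) h
  rwa [swapVarS_invol, swapVarS_invol] at this

theorem swapVar_comm (z1 z2 u v x : var) :
    swapVar var z1 z2 (swapVar var u v x) =
      swapVar var (swapVar var z1 z2 u) (swapVar var z1 z2 v) (swapVar var z1 z2 x) := by
  unfold swapVar; split_ifs <;> simp_all

theorem swapVarS_comm (zs us xs : varsort) (z1 z2 u v x : var) :
    swapVarS var varsort zs xs z1 z2 (swapVarS var varsort us xs u v x) =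
      swapVarS var varsort us xs (swapVarS var varsort zs us z1 z2 u)
        (swapVarS var varsort zs us z1 z2 v) (swapVarS var varsort zs xs z1 z2 x) := by
  unfold swapVarS
  split_ifs <;> first | exact swapVar_comm z1 z2 u v x | rfl | simp_all

theorem swapVarS_eq_self (zs xs : varsort) (z1 z2 x : var)
    (h1 : ¬(xs = zs ∧ x = z1)) (h2 : ¬(xs = zs ∧ x = z2)) :
    swapVarS var varsort zs xs z1 z2 x = x := by
  unfold swapVarS swapVar; split_ifs <;> simp_all

/-- swap is an involution -/
theorem qSwap_invol (z1 z2 : var) (zs : varsort) :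
    (∀ X : QT, qSwap z1 z2 zs (qSwap z1 z2 zs X) = X) ∧
    (∀ A : QA, qSwapAbs z1 z2 zs (qSwapAbs z1 z2 zs A) = A) := by
  apply qterm_induct
  · intro xs x; simp only [qSwap_qVar]; rw [swapVarS_invol]
  · intro d inp binp ih1 ih2
    simp only [qSwap_qOp, Option.map_map]
    congr 1 <;> funext a
    · cases h : inp a with
      | none => rfl
      | some X => simp only [Option.map_some, Function.comp_apply]; rw [ih1 a X h]
    · cases h : binp a with
      | none => rfl
      | some A => simp only [Option.map_some, Function.comp_apply]; rw [ih2 a A h]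
  · intro xs x X ih; simp only [qSwapAbs_qAbs]; rw [swapVarS_invol, ih]

/-- swap commutation -/
theorem qSwap_comm (z1 z2 u v : var) (zs us : varsort) :
    (∀ X : QT, qSwap z1 z2 zs (qSwap u v us X) =
      qSwap (swapVarS var varsort zs us z1 z2 u) (swapVarS var varsort zs us z1 z2 v) us
        (qSwap z1 z2 zs X)) ∧
    (∀ A : QA, qSwapAbs z1 z2 zs (qSwapAbs u v us A) =
      qSwapAbs (swapVarS var varsort zs us z1 z2 u) (swapVarS var varsort zs us z1 z2 v) us
        (qSwapAbs z1 z2 zs A)) := by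
  apply qterm_induct
  · intro xs x; simp only [qSwap_qVar]; rw [swapVarS_comm]
  · intro d inp binp ih1 ih2
    simp only [qSwap_qOp, Option.map_map]
    congr 1 <;> funext a
    · cases h : inp a with
      | none => rfl
      | some X => simp only [Option.map_some, Function.comp_apply]; rw [ih1 a X h]
    · cases h : binp a with
      | none => rfl
      | some A => simp only [Option.map_some, Function.comp_apply]; rw [ih2 a A h]
  · intro xs x X ih; simp only [qSwapAbs_qAbs]; rw [swapVarS_comm, ih]

/-- freshness transported by swap (forward) -/
theorem qFresh_swap_fwd {z1 z2 : var} {zs : varsort} :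
    (∀ {ys y} {X : QT}, QFresh ys y X →
      QFresh ys (swapVarS var varsort zs ys z1 z2 y) (qSwap z1 z2 zs X)) ∧
    (∀ {ys y} {A : QA}, QFreshAbs ys y A →
      QFreshAbs ys (swapVarS var varsort zs ys z1 z2 y) (qSwapAbs z1 z2 zs A)) := by
  have key : ∀ {ys y} {X : QT}, QFresh ys y X →
      QFresh ys (swapVarS var varsort zs ys z1 z2 y) (qSwap z1 z2 zs X) := by
    intro ys y X h
    refine QFresh.rec
      (motive_1 := fun X _ =>
        QFresh ys (swapVarS var varsort zs ys z1 z2 y) (qSwap z1 z2 zs X))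
      (motive_2 := fun A _ =>
        QFreshAbs ys (swapVarS var varsort zs ys z1 z2 y) (qSwapAbs z1 z2 zs A))
      ?_ ?_ ?_ ?_ h
    · intro xs x hne
      simp only [qSwap_qVar]
      refine QFresh.qVar fun heq => ?_
      rw [Prod.mk.injEq] at heq
      obtain ⟨h1, h2⟩ := heq
      subst h1
      exact hne (by rw [Prod.mk.injEq]; exact ⟨rfl, swapVarS_inj zs ys z1 z2 h2⟩)
    · intro d inp binp _ _ ih1 ih2
      simp only [qSwap_qOp]
      refine QFresh.qOp (fun i X' hX' => ?_) (fun j A' hA' => ?_)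
      · rcases Option.map_eq_some_iff.1 hX' with ⟨X0, h0, rfl⟩
        exact ih1 i X0 h0
      · rcases Option.map_eq_some_iff.1 hA' with ⟨A0, h0, rfl⟩
        exact ih2 j A0 h0
    · intro X
      simp only [qSwapAbs_qAbs]
      exact QFreshAbs.qAbs_bound
    · intro xs x X _ ih
      simp only [qSwapAbs_qAbs]
      exact QFreshAbs.qAbs_body ih
  refine ⟨key, ?_⟩
  intro ys y A h
  cases h with
  | qAbs_bound => simp only [qSwapAbs_qAbs]; exact QFreshAbs.qAbs_bound
  | qAbs_body hX => simp only [qSwapAbs_qAbs]; exact QFreshAbs.qAbs_body (key hX)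

theorem qFresh_swap_iff {z1 z2 : var} {zs ys : varsort} {y : var} {X : QT} :
    QFresh ys (swapVarS var varsort zs ys z1 z2 y) (qSwap z1 z2 zs X) ↔ QFresh ys y X := by
  constructor
  · intro h
    have := (qFresh_swap_fwd (z1 := z1) (z2 := z2) (zs := zs)).1 h
    rwa [swapVarS_invol, (qSwap_invol z1 z2 zs).1] at this
  · exact qFresh_swap_fwd.1

/-- for y untouched by the swap -/
theorem qFresh_swap_iff' {z1 z2 : var} {zs ys : varsort} {y : var} {X : QT}
    (h1 : ¬(ys = zs ∧ y = z1)) (h2 : ¬(ys = zs ∧ y = z2)) :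
    QFresh ys y (qSwap z1 z2 zs X) ↔ QFresh ys y X := by
  conv_lhs => rw [← swapVarS_eq_self zs ys z1 z2 y h1 h2]
  exact qFresh_swap_iff

end Dev2
section Dev3
variable {var varsort index bindex opsym : Type u}
local notation "QT" => QTerm var varsort index bindex opsym
local notation "QA" => QAbs var varsort index bindex opsym

/-- goodness is preserved by swapping -/
theorem qGood_swap (z1 z2 : var) (zs : varsort) :
    (∀ X : QT, QGood X → QGood (qSwap z1 z2 zs X)) ∧
    (∀ A : QA, QGoodAbs A → QGoodAbs (qSwapAbs z1 z2 zs A)) := by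
  have key : ∀ {X : QT}, QGood X → QGood (qSwap z1 z2 zs X) := by
    intro X h
    refine QGood.rec
      (motive_1 := fun X _ => QGood (qSwap z1 z2 zs X))
      (motive_2 := fun A _ => QGoodAbs (qSwapAbs z1 z2 zs A)) ?_ ?_ ?_ h
    · intro xs x; exact QGood.qVar
    · intro d inp binp _ _ hs1 hs2 ih1 ih2
      simp only [qSwap_qOp]
      refine QGood.qOp (fun i X' hX' => ?_) (fun j A' hA' => ?_) ?_ ?_
      · rcases Option.map_eq_some_iff.1 hX' with ⟨X0, h0, rfl⟩; exact ih1 i X0 h0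
      · rcases Option.map_eq_some_iff.1 hA' with ⟨A0, h0, rfl⟩; exact ih2 j A0 h0
      · have : idom (fun i => (inp i).map (qSwap z1 z2 zs)) = idom inp := by
          ext i; simp [idom]
        unfold smallDom; rw [this]; exact hs1
      · have : idom (fun j => (binp j).map (qSwapAbs z1 z2 zs)) = idom binp := by
          ext j; simp [idom]
        unfold smallDom; rw [this]; exact hs2
    · intro xs x X _ ih
      simp only [qSwapAbs_qAbs]
      exact QGoodAbs.qAbs ih
  exact ⟨fun X h => key h, fun A h => by
    cases h with
    | qAbs hX => simp only [qSwapAbs_qAbs]; exact QGoodAbs.qAbs (key hX)⟩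

/-- the set of non-fresh variables of a given sort -/
def nfSet (xs : varsort) (X : QT) : Set var := {y | ¬ QFresh xs y X}
def nfSetAbs (xs : varsort) (A : QA) : Set var := {y | ¬ QFreshAbs xs y A}

theorem nf_small (hinf : Cardinal.aleph0 ≤ Cardinal.mk var)
    (hreg : (Cardinal.mk var).IsRegular) :
    (∀ X : QT, QGood X → ∀ xs, Cardinal.mk (nfSet xs X) < Cardinal.mk var) ∧
    (∀ A : QA, QGoodAbs A → ∀ xs, Cardinal.mk (nfSetAbs xs A) < Cardinal.mk var) := by
  have key : ∀ {X : QT}, QGood X → ∀ xs, Cardinal.mk (nfSet xs X) < Cardinal.mk var := by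
    intro X h xs
    refine QGood.rec
      (motive_1 := fun X _ => ∀ xs, Cardinal.mk (nfSet xs X) < Cardinal.mk var)
      (motive_2 := fun A _ => ∀ xs, Cardinal.mk (nfSetAbs xs A) < Cardinal.mk var) ?_ ?_ ?_ h xs
    · intro ys y xs
      have hsub : nfSet xs (QTerm.qVar ys y : QT) ⊆ {y} := by
        intro v hv
        by_contra hne
        exact hv (QFresh.qVar fun heq => hne (by simpa using congrArg Prod.snd heq))
      calc Cardinal.mk (nfSet xs (QTerm.qVar ys y : QT)) ≤ Cardinal.mk ({y} : Set var) :=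
            Cardinal.mk_le_mk_of_subset hsub
        _ ≤ 1 := by simp
        _ < Cardinal.mk var := lt_of_lt_of_le Cardinal.one_lt_aleph0 hinf
    · intro d inp binp hg1 hg2 hs1 hs2 ih1 ih2 xs
      -- NF of an op is contained in union of component NFs
      set S1 : Set var := ⋃ i : idom inp, (inp i.1).elim ∅ (nfSet xs) with hS1
      set S2 : Set var := ⋃ j : idom binp, (binp j.1).elim ∅ (nfSetAbs xs) with hS2
      have hsub : nfSet xs (QTerm.qOp d inp binp : QT) ⊆ S1 ∪ S2 := by
        intro v hv
        by_contra hnotin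
        have hn1 : v ∉ S1 := fun h => hnotin (Or.inl h)
        have hn2 : v ∉ S2 := fun h => hnotin (Or.inr h)
        apply hv
        refine QFresh.qOp (fun i X hX => ?_) (fun j A hA => ?_)
        · by_contra hnf
          exact hn1 (Set.mem_iUnion.2 ⟨⟨i, by simp [idom, hX]⟩, by simp [hX, nfSet]; exact hnf⟩)
        · by_contra hnf
          exact hn2 (Set.mem_iUnion.2 ⟨⟨j, by simp [idom, hA]⟩, by simp [hA, nfSetAbs]; exact hnf⟩)
      have h1 : Cardinal.mk S1 < Cardinal.mk var := by
        refine lt_of_le_of_lt Cardinal.mk_iUnion_le_sum_mk ?_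
        refine Cardinal.sum_lt_of_isRegular hreg hs1 ?_
        rintro ⟨i, hi⟩
        rcases h : inp i with _ | X
        · simp [idom, h] at hi
        · simpa [h] using ih1 i X h xs
      have h2 : Cardinal.mk S2 < Cardinal.mk var := by
        refine lt_of_le_of_lt Cardinal.mk_iUnion_le_sum_mk ?_
        refine Cardinal.sum_lt_of_isRegular hreg hs2 ?_
        rintro ⟨j, hj⟩
        rcases h : binp j with _ | A
        · simp [idom, h] at hj
        · simpa [h] using ih2 j A h xs
      calc Cardinal.mk (nfSet xs (QTerm.qOp d inp binp : QT)) ≤ Cardinal.mk ↥(S1 ∪ S2) :=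
            Cardinal.mk_le_mk_of_subset hsub
        _ ≤ Cardinal.mk S1 + Cardinal.mk S2 := Cardinal.mk_union_le _ _
        _ < Cardinal.mk var := Cardinal.add_lt_of_lt hinf h1 h2
    · intro ys y X _ ih xs
      have hsub : nfSetAbs xs (QAbs.qAbs ys y X : QA) ⊆ nfSet xs X := by
        intro v hv
        by_contra hne
        exact hv (QFreshAbs.qAbs_body (not_not.1 hne))
      exact lt_of_le_of_lt (Cardinal.mk_le_mk_of_subset hsub) (ih xs)
  refine ⟨fun X h => key h, fun A h xs => ?_⟩
  cases h with
  | @qAbs ys x X hX =>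
    have hsub : nfSetAbs xs (QAbs.qAbs ys x X : QA) ⊆ nfSet xs X := fun v hv => by
      by_contra hne
      exact hv (QFreshAbs.qAbs_body (not_not.1 hne))
    exact lt_of_le_of_lt (Cardinal.mk_le_mk_of_subset hsub) (key hX xs)

/-- existence of fresh variables avoiding a finite list, for finitely many good terms -/
theorem exists_fresh (hinf : Cardinal.aleph0 ≤ Cardinal.mk var)
    (hreg : (Cardinal.mk var).IsRegular) (xs : varsort)
    (L : List var) (Xs : List QT) (hXs : ∀ X ∈ Xs, QGood X) :
    ∃ y : var, y ∉ L ∧ ∀ X ∈ Xs, QFresh xs y X := by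
  set S : Set var := {y | y ∈ L} ∪ ⋃ X : {X : QT // X ∈ Xs}, nfSet xs X.1 with hS
  have hsmall : Cardinal.mk S < Cardinal.mk var := by
    refine lt_of_le_of_lt (Cardinal.mk_union_le _ _) (Cardinal.add_lt_of_lt hinf ?_ ?_)
    · exact lt_of_lt_of_le (L.finite_toSet.lt_aleph0) hinf
    · refine lt_of_le_of_lt Cardinal.mk_iUnion_le_sum_mk (Cardinal.sum_lt_of_isRegular hreg ?_ ?_)
      · haveI : Finite {X : QT // X ∈ Xs} := by
          have := Xs.finite_toSet
          exact this.to_subtype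
        exact lt_of_lt_of_le (Cardinal.lt_aleph0_of_finite _) hinf
      · rintro ⟨X, hX⟩
        exact (nf_small hinf hreg).1 _ (hXs _ hX) xs
  have hne : S ≠ Set.univ := by
    intro h
    rw [h, Cardinal.mk_univ] at hsmall
    exact lt_irrefl _ hsmall
  obtain ⟨y, hy⟩ := Set.ne_univ_iff_exists_notMem S |>.1 hne
  refine ⟨y, fun hyL => hy (Or.inl hyL), fun X hX => ?_⟩
  by_contra hnf
  exact hy (Or.inr (Set.mem_iUnion.2 ⟨⟨X, hX⟩, hnf⟩))
end Dev3
section Dev4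
variable {var varsort index bindex opsym : Type u}
local notation "QT" => QTerm var varsort index bindex opsym
local notation "QA" => QAbs var varsort index bindex opsym

/-- iterated swaps -/
noncomputable def swaps (π : List (var × var × varsort)) (X : QT) : QT :=
  π.foldr (fun p Y => qSwap p.1 p.2.1 p.2.2 Y) X

noncomputable def swapsAbs (π : List (var × var × varsort)) (A : QA) : QA :=
  π.foldr (fun p B => qSwapAbs p.1 p.2.1 p.2.2 B) A

noncomputable def swapsV (π : List (var × var × varsort)) (xs : varsort) (x : var) : var :=
  π.foldr (fun p y => swapVarS var varsort p.2.2 xs p.1 p.2.1 y) x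

@[simp] theorem swaps_nil (X : QT) : swaps [] X = X := rfl
@[simp] theorem swapsAbs_nil (A : QA) : swapsAbs [] A = A := rfl
@[simp] theorem swapsV_nil (xs : varsort) (x : var) : swapsV ([] : List (var × var × varsort)) xs x = x := rfl
@[simp] theorem swaps_cons (p : var × var × varsort) (π : List (var × var × varsort)) (X : QT) :
    swaps (p :: π) X = qSwap p.1 p.2.1 p.2.2 (swaps π X) := rfl
@[simp] theorem swapsAbs_cons (p : var × var × varsort) (π : List (var × var × varsort)) (A : QA) :
    swapsAbs (p :: π) A = qSwapAbs p.1 p.2.1 p.2.2 (swapsAbs π A) := rfl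
@[simp] theorem swapsV_cons (p : var × var × varsort) (π : List (var × var × varsort))
    (xs : varsort) (x : var) :
    swapsV (p :: π) xs x = swapVarS var varsort p.2.2 xs p.1 p.2.1 (swapsV π xs x) := rfl

theorem swaps_qVar (π : List (var × var × varsort)) (xs : varsort) (x : var) :
    swaps π (QTerm.qVar xs x : QT) = .qVar xs (swapsV π xs x) := by
  induction π with
  | nil => rfl
  | cons p π ih => simp [ih]

theorem swaps_qOp (π : List (var × var × varsort)) (d : opsym)
    (inp : index → Option QT) (binp : bindex → Option QA) :
    swaps π (QTerm.qOp d inp binp : QT) =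
      .qOp d (fun i => (inp i).map (swaps π)) (fun j => (binp j).map (swapsAbs π)) := by
  induction π with
  | nil =>
    show QTerm.qOp d inp binp = _
    congr 1 <;> funext a
    · cases inp a <;> rfl
    · cases binp a <;> rfl
  | cons p π ih =>
    simp only [swaps_cons, swapsAbs_cons, ih, qSwap_qOp]
    congr 1 <;> funext a
    · cases inp a <;> rfl
    · cases binp a <;> rfl

theorem swapsAbs_qAbs (π : List (var × var × varsort)) (xs : varsort) (x : var) (X : QT) :
    swapsAbs π (QAbs.qAbs xs x X : QA) = .qAbs xs (swapsV π xs x) (swaps π X) := by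
  induction π with
  | nil => rfl
  | cons p π ih => simp [ih]

theorem qGood_swaps (π : List (var × var × varsort)) {X : QT} (h : QGood X) :
    QGood (swaps π X) := by
  induction π with
  | nil => exact h
  | cons p π ih => exact (qGood_swap p.1 p.2.1 p.2.2).1 _ ih

/-- inversion lemmas -/
theorem qFresh_qVar_inv {zs : varsort} {z : var} {xs : varsort} {x : var}
    (h : QFresh zs z (QTerm.qVar xs x : QT)) : (zs, z) ≠ (xs, x) := by
  cases h with | qVar hne => exact hne

theorem qFresh_qOp_inv {zs : varsort} {z : var} {d : opsym}
    {inp : index → Option QT} {binp : bindex → Option QA}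
    (h : QFresh zs z (QTerm.qOp d inp binp : QT)) :
    (∀ i X, inp i = some X → QFresh zs z X) ∧ (∀ j A, binp j = some A → QFreshAbs zs z A) := by
  cases h with | qOp h1 h2 => exact ⟨h1, h2⟩

theorem qFreshAbs_inv {zs : varsort} {z : var} {xs : varsort} {x : var} {X : QT}
    (h : QFreshAbs zs z (QAbs.qAbs xs x X : QA)) : (zs = xs ∧ z = x) ∨ QFresh zs z X := by
  cases h with
  | qAbs_bound => exact Or.inl ⟨rfl, rfl⟩
  | qAbs_body hX => exact Or.inr hX

/-- alpha is a congruence for swapping -/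
theorem alpha_swap :
    (∀ {X Y : QT}, Alpha X Y → ∀ z1 z2 zs,
      Alpha (qSwap z1 z2 zs X) (qSwap z1 z2 zs Y)) ∧
    (∀ {A B : QA}, AlphaAbs A B → ∀ z1 z2 zs,
      AlphaAbs (qSwapAbs z1 z2 zs A) (qSwapAbs z1 z2 zs B)) := by
  have habs : ∀ {xs : varsort} {x x' : var} {X X' : QT} {y : var}, y ∉ ({x, x'} : Set var) →
      QFresh xs y X → QFresh xs y X' →
      (∀ z1 z2 zs, Alpha (qSwap z1 z2 zs (qSwap y x xs X)) (qSwap z1 z2 zs (qSwap y x' xs X'))) →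
      ∀ z1 z2 zs, AlphaAbs (qSwapAbs z1 z2 zs (QAbs.qAbs xs x X : QA))
        (qSwapAbs z1 z2 zs (QAbs.qAbs xs x' X')) := by
    intro xs x x' X X' y hy hf hf' ih z1 z2 zs
    simp only [qSwapAbs_qAbs]
    refine AlphaAbs.qAbs (y := swapVarS var varsort zs xs z1 z2 y) ?_ ?_ ?_ ?_
    · intro hmem
      rcases hmem with h | h
      · exact hy (Or.inl (swapVarS_inj zs xs z1 z2 h))
      · exact hy (Or.inr (swapVarS_inj zs xs z1 z2 h))
    · exact qFresh_swap_fwd.1 hf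
    · exact qFresh_swap_fwd.1 hf'
    · rw [← (qSwap_comm z1 z2 y x zs xs).1, ← (qSwap_comm z1 z2 y x' zs xs).1]
      exact ih z1 z2 zs
  have key : ∀ {X Y : QT}, Alpha X Y → ∀ z1 z2 zs,
      Alpha (qSwap z1 z2 zs X) (qSwap z1 z2 zs Y) := by
    intro X Y h
    refine Alpha.rec
      (motive_1 := fun X Y _ => ∀ z1 z2 zs, Alpha (qSwap z1 z2 zs X) (qSwap z1 z2 zs Y))
      (motive_2 := fun A B _ => ∀ z1 z2 zs, AlphaAbs (qSwapAbs z1 z2 zs A) (qSwapAbs z1 z2 zs B))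
      ?_ ?_ ?_ h
    · intro xs x z1 z2 zs
      simp only [qSwap_qVar]
      exact Alpha.qVar
    · intro d inp binp inp' binp' hdom1 _ hdom2 _ ih1 ih2 z1 z2 zs
      simp only [qSwap_qOp]
      refine Alpha.qOp (fun i => ?_) (fun i X X' hX hX' => ?_) (fun j => ?_)
        (fun j A A' hA hA' => ?_)
      · simp [hdom1 i]
      · rcases Option.map_eq_some_iff.1 hX with ⟨X0, h0, rfl⟩
        rcases Option.map_eq_some_iff.1 hX' with ⟨X0', h0', rfl⟩
        exact ih1 i X0 X0' h0 h0' z1 z2 zs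
      · simp [hdom2 j]
      · rcases Option.map_eq_some_iff.1 hA with ⟨A0, h0, rfl⟩
        rcases Option.map_eq_some_iff.1 hA' with ⟨A0', h0', rfl⟩
        exact ih2 j A0 A0' h0 h0' z1 z2 zs
    · intro xs x x' X X' y hy hf hf' _ ih
      exact habs hy hf hf' ih
  refine ⟨key, fun {A B} h z1 z2 zs => ?_⟩
  cases h with
  | qAbs hy hf hf' hal => exact habs hy hf hf' (fun z1 z2 zs => key hal z1 z2 zs) z1 z2 zs

/-- symmetry of alpha (no goodness needed) -/
theorem alpha_symm :
    (∀ {X Y : QT}, Alpha X Y → Alpha Y X) ∧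
    (∀ {A B : QA}, AlphaAbs A B → AlphaAbs B A) := by
  have habs : ∀ {xs : varsort} {x x' : var} {X X' : QT} {y : var}, y ∉ ({x, x'} : Set var) →
      QFresh xs y X → QFresh xs y X' →
      Alpha (qSwap y x' xs X') (qSwap y x xs X) →
      AlphaAbs (QAbs.qAbs xs x' X' : QA) (QAbs.qAbs xs x X) := by
    intro xs x x' X X' y hy hf hf' hal
    refine AlphaAbs.qAbs (y := y) ?_ hf' hf hal
    intro hmem
    rcases hmem with h | h
    · exact hy (Or.inr h)
    · exact hy (Or.inl h)
  have key : ∀ {X Y : QT}, Alpha X Y → Alpha Y X := by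
    intro X Y h
    refine Alpha.rec
      (motive_1 := fun X Y _ => Alpha Y X)
      (motive_2 := fun A B _ => AlphaAbs B A) ?_ ?_ ?_ h
    · intro xs x; exact Alpha.qVar
    · intro d inp binp inp' binp' hdom1 _ hdom2 _ ih1 ih2
      exact Alpha.qOp (fun i => (hdom1 i).symm)
        (fun i X' X hX' hX => ih1 i X X' hX hX')
        (fun j => (hdom2 j).symm)
        (fun j A' A hA' hA => ih2 j A A' hA hA')
    · intro xs x x' X X' y hy hf hf' _ ih
      exact habs hy hf hf' ih
  refine ⟨key, fun {A B} h => ?_⟩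
  cases h with
  | qAbs hy hf hf' hal => exact habs hy hf hf' (key hal)
end Dev4
section Dev5
variable {var varsort index bindex opsym : Type u}
local notation "QT" => QTerm var varsort index bindex opsym
local notation "QA" => QAbs var varsort index bindex opsym

variable (hinf : Cardinal.aleph0 ≤ Cardinal.mk var)
    (hreg : (Cardinal.mk var).IsRegular)

include hinf hreg

/-- reflexivity on good terms (generalized over iterated swaps) -/
theorem alpha_refl_aux :
    (∀ X : QT, QGood X → ∀ π, Alpha (swaps π X) (swaps π X)) ∧
    (∀ A : QA, QGoodAbs A → ∀ π, AlphaAbs (swapsAbs π A) (swapsAbs π A)) := by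
  apply qterm_induct (P := fun X : QT => QGood X → ∀ π, Alpha (swaps π X) (swaps π X))
    (Q := fun A : QA => QGoodAbs A → ∀ π, AlphaAbs (swapsAbs π A) (swapsAbs π A))
  · intro xs x _ π
    rw [swaps_qVar]
    exact Alpha.qVar
  · intro d inp binp ih1 ih2 hg π
    cases hg with
    | qOp hg1 hg2 _ _ =>
      rw [swaps_qOp]
      refine Alpha.qOp (fun i => Iff.rfl) (fun i X X' hX hX' => ?_) (fun j => Iff.rfl)
        (fun j A A' hA hA' => ?_)
      · rcases Option.map_eq_some_iff.1 hX with ⟨X0, h0, rfl⟩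
        rw [hX] at hX'
        cases hX'
        exact ih1 i X0 h0 (hg1 i X0 h0) π
      · rcases Option.map_eq_some_iff.1 hA with ⟨A0, h0, rfl⟩
        rw [hA] at hA'
        cases hA'
        exact ih2 j A0 h0 (hg2 j A0 h0) π
  · intro xs x X ih hg π
    cases hg with
    | qAbs hgX =>
      rw [swapsAbs_qAbs]
      obtain ⟨y, hyL, hyF⟩ := exists_fresh hinf hreg xs [swapsV π xs x] [swaps π X]
        (by intro W hW; simp at hW; subst hW; exact qGood_swaps π hgX)
      have hfr : QFresh xs y (swaps π X) := hyF _ (by simp)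
      refine AlphaAbs.qAbs (y := y) ?_ hfr hfr ?_
      · intro hmem
        have : y = swapsV π xs x := by rcases hmem with h | h <;> exact h
        exact hyL (by simp [this])
      · exact ih hgX ((y, swapsV π xs x, xs) :: π)

theorem alpha_refl {X : QT} (h : QGood X) : Alpha X X := by
  have := (alpha_refl_aux hinf hreg).1 X h []
  simpa using this

theorem alphaAbs_refl {A : QA} (h : QGoodAbs A) : AlphaAbs A A := by
  have := (alpha_refl_aux hinf hreg).2 A h []
  simpa using this

/-- swapping two fresh variables is alpha-equivalent to the identity -/
theorem alpha_swap_fresh_aux :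
    (∀ X : QT, QGood X → ∀ π z1 z2 zs, QFresh zs z1 (swaps π X) → QFresh zs z2 (swaps π X) →
      Alpha (qSwap z1 z2 zs (swaps π X)) (swaps π X)) ∧
    (∀ A : QA, QGoodAbs A → ∀ π z1 z2 zs,
      QFreshAbs zs z1 (swapsAbs π A) → QFreshAbs zs z2 (swapsAbs π A) →
      AlphaAbs (qSwapAbs z1 z2 zs (swapsAbs π A)) (swapsAbs π A)) := by
  apply qterm_induct
  · intro xs x _ π z1 z2 zs h1 h2
    rw [swaps_qVar] at h1 h2 ⊢
    have hne1 := qFresh_qVar_inv h1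
    have hne2 := qFresh_qVar_inv h2
    rw [qSwap_qVar, swapVarS_eq_self zs xs z1 z2 _
      (fun ⟨ha, hb⟩ => hne1 (by subst ha; rw [hb])) (fun ⟨ha, hb⟩ => hne2 (by subst ha; rw [hb]))]
    exact Alpha.qVar
  · intro d inp binp ih1 ih2 hg π z1 z2 zs h1 h2
    cases hg with
    | qOp hg1 hg2 _ _ =>
      rw [swaps_qOp] at h1 h2 ⊢
      obtain ⟨h1t, h1a⟩ := qFresh_qOp_inv h1
      obtain ⟨h2t, h2a⟩ := qFresh_qOp_inv h2
      rw [qSwap_qOp]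
      refine Alpha.qOp (fun i => by simp) (fun i W W' hW hW' => ?_) (fun j => by simp)
        (fun j B B' hB hB' => ?_)
      · rcases Option.map_eq_some_iff.1 hW' with ⟨X0, h0, rfl⟩
        rcases Option.map_eq_some_iff.1 hW with ⟨W0, hW0, rfl⟩
        rw [hW'] at hW0
        cases hW0
        exact ih1 i X0 h0 (hg1 i X0 h0) π z1 z2 zs (h1t i _ hW') (h2t i _ hW')
      · rcases Option.map_eq_some_iff.1 hB' with ⟨A0, h0, rfl⟩
        rcases Option.map_eq_some_iff.1 hB with ⟨B0, hB0, rfl⟩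
        rw [hB'] at hB0
        cases hB0
        exact ih2 j A0 h0 (hg2 j A0 h0) π z1 z2 zs (h1a j _ hB') (h2a j _ hB')
  · intro xs x X ih hg π z1 z2 zs h1 h2
    cases hg with
    | qAbs hgX =>
      rw [swapsAbs_qAbs] at h1 h2 ⊢
      set x1 := swapsV π xs x with hx1
      set W0 := swaps π X with hW0
      rw [qSwapAbs_qAbs]
      set sx1 := swapVarS var varsort zs xs z1 z2 x1 with hsx1
      obtain ⟨w, hwL, hwF⟩ := exists_fresh hinf hreg xs [x1, sx1, z1, z2] [W0]
        (by intro W hW; simp at hW; subst hW; exact qGood_swaps π hgX)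
      have hwW0 : QFresh xs w W0 := hwF _ (by simp)
      have hwx1 : w ≠ x1 := fun h => hwL (by simp [h])
      have hwsx1 : w ≠ sx1 := fun h => hwL (by simp [h])
      have hwz1 : w ≠ z1 := fun h => hwL (by simp [h])
      have hwz2 : w ≠ z2 := fun h => hwL (by simp [h])
      -- freshness of z1, z2 in qSwap w x1 xs W0
      have htrans : ∀ z : var, QFreshAbs zs z (QAbs.qAbs xs x1 W0 : QA) → z ≠ w →
          QFresh zs z (qSwap w x1 xs W0) := by
        intro z hz hzw
        have base : QFresh zs (swapVarS var varsort xs zs w x1 z) W0 := by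
          rcases qFreshAbs_inv hz with ⟨hzs, hzx⟩ | hbody
          · have hy0 : swapVarS var varsort xs zs w x1 z = w := by
              unfold swapVarS swapVar
              split_ifs <;> simp_all
            rw [hy0, hzs]; exact hwW0
          · by_cases hcase : zs = xs ∧ z = x1
            · obtain ⟨ha, hb⟩ := hcase
              have hy0 : swapVarS var varsort xs zs w x1 z = w := by
                unfold swapVarS swapVar
                split_ifs <;> simp_all
              rw [hy0, ha]; exact hwW0
            · rw [swapVarS_eq_self xs zs w x1 z (fun ⟨ha, hb⟩ => hzw hb)
                (fun ⟨ha, hb⟩ => hcase ⟨ha, hb⟩)]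
              exact hbody
        have := (qFresh_swap_fwd (z1 := w) (z2 := x1) (zs := xs)).1 base
        rwa [swapVarS_invol] at this
      have hz1w : z1 ≠ w := fun h => hwz1 h.symm
      have hz2w : z2 ≠ w := fun h => hwz2 h.symm
      have hf1 : QFresh zs z1 (qSwap w x1 xs W0) := htrans z1 h1 hz1w
      have hf2 : QFresh zs z2 (qSwap w x1 xs W0) := htrans z2 h2 hz2w
      have key := ih hgX ((w, x1, xs) :: π) z1 z2 zs (by simpa using hf1) (by simpa using hf2)
      simp only [swaps_cons] at key
      -- key : Alpha (qSwap z1 z2 zs (qSwap w x1 xs W0)) (qSwap w x1 xs W0)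
      have hcomm : qSwap z1 z2 zs (qSwap w x1 xs W0) = qSwap w sx1 xs (qSwap z1 z2 zs W0) := by
        rw [(qSwap_comm z1 z2 w x1 zs xs).1]
        congr 1
        exact swapVarS_eq_self zs xs z1 z2 w (fun ⟨_, hb⟩ => hwz1 hb) (fun ⟨_, hb⟩ => hwz2 hb)
      rw [hcomm] at key
      refine AlphaAbs.qAbs (y := w) ?_ ?_ hwW0 key
      · intro hmem
        rcases hmem with h | h
        · exact hwsx1 h
        · exact hwx1 h
      · rw [qFresh_swap_iff' (fun ⟨_, hb⟩ => hwz1 hb) (fun ⟨_, hb⟩ => hwz2 hb)]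
        exact hwW0
end Dev5
section Dev6
variable {var varsort index bindex opsym : Type u}
local notation "QT" => QTerm var varsort index bindex opsym
local notation "QA" => QAbs var varsort index bindex opsym

theorem qSwap_shift {u y x : var} {xs : varsort} (hux : u ≠ x) (hyx : y ≠ x) (X : QT) :
    qSwap u y xs (qSwap y x xs X) = qSwap u x xs (qSwap u y xs X) := by
  have h := (qSwap_comm u y y x xs xs).1 X
  rw [h, show swapVarS var varsort xs xs u y y = u by
      unfold swapVarS swapVar; split_ifs <;> simp_all,
    show swapVarS var varsort xs xs u y x = x by
      unfold swapVarS swapVar; split_ifs <;> simp_all]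

variable (hinf : Cardinal.aleph0 ≤ Cardinal.mk var)
    (hreg : (Cardinal.mk var).IsRegular)

include hinf hreg

theorem alpha_trans_aux :
    (∀ X : QT, QGood X → ∀ π Y Z, QGood Y → QGood Z →
      Alpha (swaps π X) Y → Alpha Y Z → Alpha (swaps π X) Z) ∧
    (∀ A : QA, QGoodAbs A → ∀ π B C, QGoodAbs B → QGoodAbs C →
      AlphaAbs (swapsAbs π A) B → AlphaAbs B C → AlphaAbs (swapsAbs π A) C) := by
  have sym : ∀ {X Y : QT}, Alpha X Y → Alpha Y X := alpha_symm.1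
  have cong : ∀ {X Y : QT}, Alpha X Y → ∀ z1 z2 zs,
      Alpha (qSwap z1 z2 zs X) (qSwap z1 z2 zs Y) := alpha_swap.1
  have ffs : ∀ (X : QT), QGood X → ∀ π z1 z2 zs,
      QFresh zs z1 (swaps π X) → QFresh zs z2 (swaps π X) →
      Alpha (qSwap z1 z2 zs (swaps π X)) (swaps π X) := (alpha_swap_fresh_aux hinf hreg).1
  apply qterm_induct
  · intro xs x _ π Y Z _ _ h1 h2
    rw [swaps_qVar] at h1 ⊢
    cases h1
    cases h2
    exact Alpha.qVar
  · intro d inp binp iht iha hg π Y Z hgY hgZ h1 h2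
    cases hg with
    | qOp hg1 hg2 _ _ =>
      rw [swaps_qOp] at h1 ⊢
      cases h1 with
      | @qOp _ _ _ inpY binpY hd1 ht1 hd1' ha1 =>
        cases h2 with
        | @qOp _ _ _ inpZ binpZ hd2 ht2 hd2' ha2 =>
          cases hgY with
          | qOp hgY1 hgY2 _ _ =>
            cases hgZ with
            | qOp hgZ1 hgZ2 _ _ =>
              refine Alpha.qOp (fun i => (hd1 i).trans (hd2 i))
                (fun i XL ZR hXL hZR => ?_)
                (fun j => (hd1' j).trans (hd2' j))
                (fun j AL CR hAL hCR => ?_)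
              · rcases Option.map_eq_some_iff.1 hXL with ⟨X0, h0, rfl⟩
                have hYi : ∃ Yi, inpY i = some Yi := by
                  rcases hY : inpY i with _ | Yi
                  · exact absurd ((hd1 i).2 hY) (by simp [h0])
                  · exact ⟨Yi, rfl⟩
                obtain ⟨Yi, hYi⟩ := hYi
                exact iht i X0 h0 (hg1 i X0 h0) π Yi ZR (hgY1 i Yi hYi) (hgZ1 i ZR hZR)
                  (ht1 i _ Yi hXL hYi) (ht2 i Yi ZR hYi hZR)
              · rcases Option.map_eq_some_iff.1 hAL with ⟨A0, h0, rfl⟩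
                have hBj : ∃ Bj, binpY j = some Bj := by
                  rcases hB : binpY j with _ | Bj
                  · exact absurd ((hd1' j).2 hB) (by simp [h0])
                  · exact ⟨Bj, rfl⟩
                obtain ⟨Bj, hBj⟩ := hBj
                exact iha j A0 h0 (hg2 j A0 h0) π Bj CR (hgY2 j Bj hBj) (hgZ2 j CR hCR)
                  (ha1 j _ Bj hAL hBj) (ha2 j Bj CR hBj hCR)
  · intro xs x X ih hg π B C hgB hgC h1 h2
    cases hg with
    | qAbs hgX =>
      rw [swapsAbs_qAbs] at h1 ⊢
      set x1 := swapsV π xs x with hx1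
      set W0 := swaps π X with hW0def
      cases h1 with
      | @qAbs _ _ x' _ Y0 y hy hfyW hfyY hal =>
        cases hgB with
        | qAbs hgY0 =>
          cases h2 with
          | @qAbs _ _ x'' _ Z0 z hz hfzY hfzZ hal2 =>
            cases hgC with
            | qAbs hgZ0 =>
              have hgW0 : QGood W0 := qGood_swaps π hgX
              obtain ⟨u, huL, huF⟩ := exists_fresh hinf hreg xs [x1, x', x'', y, z]
                [W0, Y0, Z0] (by
                  intro W hW
                  simp at hW
                  rcases hW with rfl | rfl | rfl
                  exacts [hgW0, hgY0, hgZ0])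
              have hufw : QFresh xs u W0 := huF _ (by simp)
              have hufy : QFresh xs u Y0 := huF _ (by simp)
              have hufz : QFresh xs u Z0 := huF _ (by simp)
              have hux1 : u ≠ x1 := fun h => huL (by simp [h])
              have hux' : u ≠ x' := fun h => huL (by simp [h])
              have hux'' : u ≠ x'' := fun h => huL (by simp [h])
              have huy : u ≠ y := fun h => huL (by simp [h])
              have huz : u ≠ z := fun h => huL (by simp [h])
              have hyx1 : y ≠ x1 := fun h => hy (Or.inl h)
              have hyx' : y ≠ x' := fun h => hy (Or.inr h)
              have hzx' : z ≠ x' := fun h => hz (Or.inl h)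
              have hzx'' : z ≠ x'' := fun h => hz (Or.inr h)
              set L0 := qSwap u x1 xs W0 with hL0
              -- goodness helpers
              have gW1 : QGood (qSwap u y xs W0) := (qGood_swap u y xs).1 _ hgW0
              have gY1 : QGood (qSwap u y xs Y0) := (qGood_swap u y xs).1 _ hgY0
              have gY2 : QGood (qSwap u z xs Y0) := (qGood_swap u z xs).1 _ hgY0
              have gZ1 : QGood (qSwap u z xs Z0) := (qGood_swap u z xs).1 _ hgZ0
              -- ihX specialized
              have ihX := ih hgX ((u, x1, xs) :: π)
              simp only [swaps_cons] at ihX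
              -- step 1 : Alpha L0 (qSwap u x1 (qSwap u y W0))
              have hIuy : Alpha (qSwap u y xs W0) W0 := ffs X hgX π u y xs hufw hfyW
              have a3 : Alpha L0 (qSwap u x1 xs (qSwap u y xs W0)) := cong (sym hIuy) u x1 xs
              have a5 : Alpha (qSwap u y xs (qSwap y x1 xs W0))
                  (qSwap u y xs (qSwap y x' xs Y0)) := cong hal u y xs
              rw [qSwap_shift hux1 hyx1, qSwap_shift hux' hyx'] at a5
              have t1 : Alpha L0 (qSwap u x' xs (qSwap u y xs Y0)) :=
                ihX _ _ ((qGood_swap u x1 xs).1 _ gW1) ((qGood_swap u x' xs).1 _ gY1) a3 a5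
              have hIY : Alpha (qSwap u y xs Y0) Y0 := by
                have := ffs Y0 hgY0 [] u y xs (by simpa using hufy) (by simpa using hfyY)
                simpa using this
              have a8 : Alpha (qSwap u x' xs (qSwap u y xs Y0)) (qSwap u x' xs Y0) :=
                cong hIY u x' xs
              have t2 : Alpha L0 (qSwap u x' xs Y0) :=
                ihX _ _ ((qGood_swap u x' xs).1 _ gY1) ((qGood_swap u x' xs).1 _ hgY0) t1 a8
              have hIYz : Alpha (qSwap u z xs Y0) Y0 := by
                have := ffs Y0 hgY0 [] u z xs (by simpa using hufy) (by simpa using hfzY)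
                simpa using this
              have b1 : Alpha (qSwap u x' xs Y0) (qSwap u x' xs (qSwap u z xs Y0)) :=
                cong (sym hIYz) u x' xs
              have t3 : Alpha L0 (qSwap u x' xs (qSwap u z xs Y0)) :=
                ihX _ _ ((qGood_swap u x' xs).1 _ hgY0) ((qGood_swap u x' xs).1 _ gY2) t2 b1
              have b3 : Alpha (qSwap u z xs (qSwap z x' xs Y0))
                  (qSwap u z xs (qSwap z x'' xs Z0)) := cong hal2 u z xs
              rw [qSwap_shift hux' hzx', qSwap_shift hux'' hzx''] at b3
              have t4 : Alpha L0 (qSwap u x'' xs (qSwap u z xs Z0)) :=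
                ihX _ _ ((qGood_swap u x' xs).1 _ gY2) ((qGood_swap u x'' xs).1 _ gZ1) t3 b3
              have hIZ : Alpha (qSwap u z xs Z0) Z0 := by
                have := ffs Z0 hgZ0 [] u z xs (by simpa using hufz) (by simpa using hfzZ)
                simpa using this
              have b5 : Alpha (qSwap u x'' xs (qSwap u z xs Z0)) (qSwap u x'' xs Z0) :=
                cong hIZ u x'' xs
              have t5 : Alpha L0 (qSwap u x'' xs Z0) :=
                ihX _ _ ((qGood_swap u x'' xs).1 _ gZ1) ((qGood_swap u x'' xs).1 _ hgZ0) t4 b5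
              refine AlphaAbs.qAbs (y := u) ?_ hufw hufz t5
              intro hmem
              rcases hmem with h | h
              · exact hux1 h
              · exact hux'' h
end Dev6
/-- `Alpha` is an equivalence relation (reflexive, symmetric,
transitive) on good quasiterms, and `AlphaAbs` is an equivalence relation on good
quasiabstractions. -/
theorem alpha_is_equivalence (hinf : Cardinal.aleph0 ≤ Cardinal.mk var)
    (hreg : (Cardinal.mk var).IsRegular) :
    (∀ X : QTerm var varsort index bindex opsym, QGood X → Alpha X X) ∧
    (∀ X Y : QTerm var varsort index bindex opsym, QGood X → QGood Y → Alpha X Y → Alpha Y X) ∧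
    (∀ X Y Z : QTerm var varsort index bindex opsym, QGood X → QGood Y → QGood Z →
      Alpha X Y → Alpha Y Z → Alpha X Z) ∧
    (∀ A : QAbs var varsort index bindex opsym, QGoodAbs A → AlphaAbs A A) ∧
    (∀ A B : QAbs var varsort index bindex opsym, QGoodAbs A → QGoodAbs B → AlphaAbs A B → AlphaAbs B A) ∧
    (∀ A B C : QAbs var varsort index bindex opsym, QGoodAbs A → QGoodAbs B → QGoodAbs C →
      AlphaAbs A B → AlphaAbs B C → AlphaAbs A C) := by
  refine ⟨fun X h => alpha_refl hinf hreg h,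
    fun X Y _ _ h => alpha_symm.1 h,
    fun X Y Z hX hY hZ h1 h2 => ?_,
    fun A h => alphaAbs_refl hinf hreg h,
    fun A B _ _ h => alpha_symm.2 h,
    fun A B C hA hB hC h1 h2 => ?_⟩
  · have := (alpha_trans_aux hinf hreg).1 X hX [] Y Z hY hZ (by simpa using h1) h2
    simpa using this
  · have := (alpha_trans_aux hinf hreg).2 A hA [] B C hB hC (by simpa using h1) h2
    simpa using this

end Binding
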